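/- Let k ≥ 1, p ∈ (1, 2) and M > 0. There exists a constant c = c(k,p,M) > 0 such that for all z, η ∈ ℝ^k with |η| ≤ M one has |V_p(z − η)| ≤ c |V_p(z) − V_p(η)|. -/

import Mathlib

open Real

noncomputable def Vp (p : ℝ) {E : Type*} [NormedAddCommGroup E] [NormedSpace ℝ E] (z : E) : E :=
  ((1 + ‖z‖ ^ 2) ^ ((p - 2) / 4)) • z

-- derivative of g r = (1+r^2)^q * r
lemma hasDerivAt_g (p : ℝ) (r : ℝ) :
    HasDerivAt (fun r : ℝ => (1 + r ^ 2) ^ ((p - 2) / 4) * r)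
      ((1 + r ^ 2) ^ ((p - 2) / 4 - 1) * (1 + p / 2 * r ^ 2)) r := by
  have hpos : (0:ℝ) < 1 + r ^ 2 := by positivity
  have h1 : HasDerivAt (fun r : ℝ => 1 + r ^ 2) (2 * r) r := by
    simpa using ((hasDerivAt_pow 2 r).const_add 1)
  have h2 := (h1.rpow_const (p := (p - 2) / 4) (Or.inl hpos.ne')).mul (hasDerivAt_id r)
  simp only [id_eq, mul_one] at h2
  refine h2.congr_deriv ?_
  have : (1 + r ^ 2) ^ ((p - 2) / 4)
      = (1 + r ^ 2) ^ ((p - 2) / 4 - 1) * (1 + r ^ 2) := by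
    rw [← Real.rpow_add_one hpos.ne']; ring_nf
  rw [this]; ring

-- scalar MVT lemma
lemma lemA (p : ℝ) (hp1 : 1 < p) (hp2 : p < 2) {α β : ℝ} (hβ : 0 ≤ β) (hβα : β ≤ α) :
    p / 2 * (1 + α ^ 2) ^ ((p - 2) / 4) * (α - β)
      ≤ (1 + α ^ 2) ^ ((p - 2) / 4) * α - (1 + β ^ 2) ^ ((p - 2) / 4) * β := by
  set q := (p - 2) / 4 with hq
  have hqneg : q ≤ 0 := by rw [hq]; linarith
  set C := p / 2 * (1 + α ^ 2) ^ q with hC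
  have hd : ∀ r : ℝ, HasDerivAt (fun r : ℝ => (1 + r ^ 2) ^ q * r - C * r)
      ((1 + r ^ 2) ^ (q - 1) * (1 + p / 2 * r ^ 2) - C) r := by
    intro r
    have := (hasDerivAt_g p r).sub ((hasDerivAt_id r).const_mul C)
    simp at this
    exact this
  have hmono : MonotoneOn (fun r : ℝ => (1 + r ^ 2) ^ q * r - C * r) (Set.Icc 0 α) := by
    apply monotoneOn_of_deriv_nonneg (convex_Icc 0 α)
    · exact (fun r _ => ((hd r).differentiableAt).continuousAt.continuousWithinAt)
    · exact fun r _ => ((hd r).differentiableAt).differentiableWithinAt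
    · intro r hr
      rw [interior_Icc] at hr
      rw [(hd r).deriv]
      have hr0 : 0 ≤ r := hr.1.le
      have hpos : (0:ℝ) < 1 + r ^ 2 := by positivity
      have hstep1 : p / 2 * (1 + r ^ 2) ≤ 1 + p / 2 * r ^ 2 := by nlinarith
      have hstep2 : (1 + α ^ 2) ^ q ≤ (1 + r ^ 2) ^ q := by
        apply Real.rpow_le_rpow_of_nonpos hpos _ hqneg
        nlinarith [hr.2]
      have hexp : (1 + r ^ 2) ^ (q - 1) * (1 + r ^ 2) = (1 + r ^ 2) ^ q := by
        rw [← Real.rpow_add_one hpos.ne']; ring_nf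
      have h3 : p / 2 * (1 + r ^ 2) ^ q ≤ (1 + r ^ 2) ^ (q - 1) * (1 + p / 2 * r ^ 2) := by
        calc p / 2 * (1 + r ^ 2) ^ q = (1 + r ^ 2) ^ (q - 1) * (p / 2 * (1 + r ^ 2)) := by
              rw [← hexp]; ring
          _ ≤ (1 + r ^ 2) ^ (q - 1) * (1 + p / 2 * r ^ 2) := by
              apply mul_le_mul_of_nonneg_left hstep1 (Real.rpow_nonneg hpos.le _)
      have h4 : C ≤ p / 2 * (1 + r ^ 2) ^ q := by
        rw [hC]
        apply mul_le_mul_of_nonneg_left hstep2 (by linarith)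
      linarith
  have := hmono (Set.mem_Icc.mpr ⟨hβ, hβα⟩) (Set.mem_Icc.mpr ⟨hβ.trans hβα, le_refl α⟩) hβα
  simp only at this
  linarith [this]

lemma lemC (p fa fb α β t : ℝ) (hp2 : p ≤ 2) (hfa0 : 0 < fa) (hfab : fa ≤ fb)
    (htab : t ≤ α * β) (hβα : β ≤ α)
    (hA : p / 2 * fa * (α - β) ≤ fa * α - fb * β) :
    p / 2 * fa * (α ^ 2 - 2 * t + β ^ 2) ≤ fa * α ^ 2 + fb * β ^ 2 - (fa + fb) * t := by
  have hS1 : 0 ≤ (α * β - t) * (fa + fb - p * fa) := by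
    apply mul_nonneg (by linarith) (by nlinarith)
  have hS2 : 0 ≤ (α - β) * ((fa * α - fb * β) - p / 2 * fa * (α - β)) := by
    apply mul_nonneg (by linarith) (by linarith)
  nlinarith [hS1, hS2]

open RealInnerProductSpace in
lemma lemB {F : Type*} [NormedAddCommGroup F] [InnerProductSpace ℝ F]
    (p : ℝ) (hp1 : 1 < p) (hp2 : p < 2) (z η : F) (h : ‖η‖ ≤ ‖z‖) :
    p / 2 * (1 + ‖z‖ ^ 2) ^ ((p - 2) / 4) * ‖z - η‖ ^ 2
      ≤ ⟪Vp p z - Vp p η, z - η⟫ := by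
  have hα : (0:ℝ) < 1 + ‖z‖ ^ 2 := by positivity
  have hβ : (0:ℝ) < 1 + ‖η‖ ^ 2 := by positivity
  have hqneg : (p - 2) / 4 ≤ 0 := by linarith
  have hinner : ⟪Vp p z - Vp p η, z - η⟫
      = (1 + ‖z‖ ^ 2) ^ ((p - 2) / 4) * ‖z‖ ^ 2 + (1 + ‖η‖ ^ 2) ^ ((p - 2) / 4) * ‖η‖ ^ 2
        - ((1 + ‖z‖ ^ 2) ^ ((p - 2) / 4) + (1 + ‖η‖ ^ 2) ^ ((p - 2) / 4)) * ⟪z, η⟫ := by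
    rw [Vp, Vp]
    simp only [inner_sub_left, inner_sub_right, real_inner_smul_left,
      real_inner_self_eq_norm_sq]
    rw [real_inner_comm η z]
    ring
  rw [hinner, norm_sub_sq_real]
  apply lemC
  · linarith
  · exact Real.rpow_pos_of_pos hα _
  · apply Real.rpow_le_rpow_of_nonpos hβ (by nlinarith [norm_nonneg η]) hqneg
  · exact real_inner_le_norm z η
  · exact h
  · exact lemA p hp1 hp2 (norm_nonneg η) h

open RealInnerProductSpace

theorem stmt_7 (k : ℕ) (hk : 1 ≤ k) (p : ℝ) (hp1 : 1 < p) (hp2 : p < 2) (M : ℝ) (hM : 0 < M) :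
    ∃ c : ℝ, 0 < c ∧ ∀ z η : EuclideanSpace ℝ (Fin k), ‖η‖ ≤ M →
      ‖Vp p (z - η)‖ ≤ c * ‖Vp p z - Vp p η‖ := by
  have hp0 : (0:ℝ) < p := by linarith
  set q := (p - 2) / 4 with hq
  have hqneg : q ≤ 0 := by rw [hq]; linarith
  refine ⟨2 / p * (2 * (1 + M ^ 2)) ^ ((2 - p) / 4), by positivity, ?_⟩
  set c := 2 / p * (2 * (1 + M ^ 2)) ^ ((2 - p) / 4) with hc
  have hc0 : 0 < c := by positivity
  intro z η hη
  have hnormVp : ∀ w : EuclideanSpace ℝ (Fin k), ‖Vp p w‖ = (1 + ‖w‖ ^ 2) ^ q * ‖w‖ := by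
    intro w
    rw [Vp, norm_smul, Real.norm_eq_abs,
      abs_of_pos (Real.rpow_pos_of_pos (by positivity) _), hq]
  set d := ‖z - η‖ with hd
  set m := max ‖z‖ ‖η‖ with hm
  have hm0 : 0 ≤ m := le_trans (norm_nonneg z) (le_max_left _ _)
  have hB : p / 2 * (1 + m ^ 2) ^ q * d ^ 2 ≤ ⟪Vp p z - Vp p η, z - η⟫ := by
    rcases le_total ‖η‖ ‖z‖ with hcase | hcase
    · rw [hm, max_eq_left hcase]
      exact lemB p hp1 hp2 z η hcase
    · have := lemB p hp1 hp2 η z hcase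
      rw [hm, max_eq_right hcase]
      have e1 : ⟪Vp p η - Vp p z, η - z⟫ = ⟪Vp p z - Vp p η, z - η⟫ := by
        rw [show Vp p η - Vp p z = -(Vp p z - Vp p η) by abel,
          show η - z = -(z - η) by abel, inner_neg_neg]
      have e2 : ‖η - z‖ = d := norm_sub_rev η z
      rw [e1, e2] at this
      exact this
  rcases eq_or_lt_of_le (norm_nonneg (z - η)) with hd0 | hd0
  · have hzη : z - η = 0 := norm_eq_zero.mp hd0.symm
    have : Vp p (z - η) = 0 := by rw [hzη, Vp]; simp
    rw [this, norm_zero]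
    positivity
  · -- d > 0
    have h5 : p / 2 * (1 + m ^ 2) ^ q * d ≤ ‖Vp p z - Vp p η‖ := by
      have hCS : ⟪Vp p z - Vp p η, z - η⟫ ≤ ‖Vp p z - Vp p η‖ * d := real_inner_le_norm _ _
      have := hB.trans hCS
      have hdd : p / 2 * (1 + m ^ 2) ^ q * d * d ≤ ‖Vp p z - Vp p η‖ * d := by
        nlinarith
      exact le_of_mul_le_mul_right hdd hd0
    have hmd : m ≤ d + M := by
      apply max_le _ (by linarith)
      have := norm_sub_norm_le z η
      rw [← hd] at this
      linarith
    have hmle : 1 + m ^ 2 ≤ 2 * (1 + M ^ 2) * (1 + d ^ 2) := by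
      nlinarith [sq_nonneg (d - M), sq_nonneg (d * M), hm0]
    have h6 : (2 * (1 + M ^ 2)) ^ q * (1 + d ^ 2) ^ q ≤ (1 + m ^ 2) ^ q := by
      rw [← Real.mul_rpow (by positivity) (by positivity)]
      exact Real.rpow_le_rpow_of_nonpos (by positivity) hmle hqneg
    have hcc : c * (p / 2) * (2 * (1 + M ^ 2)) ^ q = 1 := by
      rw [hc, hq]
      have : (2 * (1 + M ^ 2)) ^ ((2 - p) / 4) * (2 * (1 + M ^ 2)) ^ ((p - 2) / 4) = 1 := by
        rw [← Real.rpow_add (by positivity),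
          show (2 - p) / 4 + (p - 2) / 4 = 0 by ring, Real.rpow_zero]
      field_simp
      nlinarith [this]
    calc ‖Vp p (z - η)‖ = (1 + d ^ 2) ^ q * d := hnormVp _
      _ = c * (p / 2) * (2 * (1 + M ^ 2)) ^ q * ((1 + d ^ 2) ^ q * d) := by
          rw [hcc]; ring
      _ = c * (p / 2 * ((2 * (1 + M ^ 2)) ^ q * (1 + d ^ 2) ^ q) * d) := by ring
      _ ≤ c * (p / 2 * (1 + m ^ 2) ^ q * d) := by
          apply mul_le_mul_of_nonneg_left _ hc0.le
          apply mul_le_mul_of_nonneg_right _ hd0.le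
          exact mul_le_mul_of_nonneg_left h6 (by linarith)
      _ ≤ c * ‖Vp p z - Vp p η‖ := mul_le_mul_of_nonneg_left h5 hc0.le
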